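/- Let Q be a finite quiver with vertex set Q₀ = {1,…,n}. The path algebra kQ, equipped with Δ(p) = p ⊗ p and ε(p) = 1 for every path p (including trivial paths eᵢ), is a weak bialgebra. It is a bialgebra if and only if Q has exactly one vertex. -/

import Mathlib

open TensorProduct LinearMap

namespace WeakBialgebraRaw

variable (k : Type*) [Field k] (A : Type*) [AddCommGroup A] [Module k A]

/-- The multiplication induced on `A ⊗ A` by a bilinear multiplication on `A`:
`(a ⊗ b)·(c ⊗ d) = ac ⊗ bd`. -/
noncomputable def mulT (mul : A →ₗ[k] A →ₗ[k] A) :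
    (A ⊗[k] A) →ₗ[k] (A ⊗[k] A) →ₗ[k] (A ⊗[k] A) :=
  TensorProduct.lift ((TensorProduct.mapBilinear (RingHom.id k) A A A A).compl₁₂ mul mul)

/-- The multiplication induced on `(A ⊗ A) ⊗ A`. -/
noncomputable def mulT3 (mul : A →ₗ[k] A →ₗ[k] A) :
    ((A ⊗[k] A) ⊗[k] A) →ₗ[k] ((A ⊗[k] A) ⊗[k] A) →ₗ[k] ((A ⊗[k] A) ⊗[k] A) :=
  TensorProduct.lift
    ((TensorProduct.mapBilinear (RingHom.id k) (A ⊗[k] A) A (A ⊗[k] A) A).compl₁₂ (mulT k A mul) mul)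

/-- `ε ⊗ ε` followed by multiplication of scalars. -/
noncomputable def counit2 (counit : A →ₗ[k] k) : A ⊗[k] A →ₗ[k] k :=
  (LinearMap.mul' k k) ∘ₗ TensorProduct.map counit counit

/-- The weak bialgebra axioms for the data `(A, mul, one, comul, counit)`:
`(A, mul, one)` is an associative unital algebra, `(A, comul, counit)` is a coassociative
counital coalgebra, comultiplication is multiplicative, the counit is weakly multiplicative
(`ε(abc) = ε(ab₁)ε(b₂c) = ε(ab₂)ε(b₁c)`), and the unit is weakly comultiplicative
(`Δ²(1) = (Δ(1)⊗1)(1⊗Δ(1)) = (1⊗Δ(1))(Δ(1)⊗1)`). -/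
structure IsWeakBialgebra (mul : A →ₗ[k] A →ₗ[k] A) (one : A)
    (comul : A →ₗ[k] A ⊗[k] A) (counit : A →ₗ[k] k) : Prop where
  mul_assoc : ∀ a b c : A, mul (mul a b) c = mul a (mul b c)
  one_mul : ∀ a : A, mul one a = a
  mul_one : ∀ a : A, mul a one = a
  coassoc : ∀ a : A, rTensor A comul (comul a)
    = (TensorProduct.assoc k A A A).symm (lTensor A comul (comul a))
  counit_left : ∀ a : A, (TensorProduct.lid k A) (rTensor A counit (comul a)) = a
  counit_right : ∀ a : A, (TensorProduct.rid k A) (lTensor A counit (comul a)) = a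
  comul_mul : ∀ a b : A, comul (mul a b) = mulT k A mul (comul a) (comul b)
  counit_weak : ∀ a b c : A, counit (mul (mul a b) c)
    = counit2 k A counit
        (mulT k A mul (mulT k A mul (a ⊗ₜ[k] one) (comul b)) (one ⊗ₜ[k] c))
  counit_weak' : ∀ a b c : A, counit (mul (mul a b) c)
    = counit2 k A counit
        (mulT k A mul (mulT k A mul (one ⊗ₜ[k] a) (comul b)) (c ⊗ₜ[k] one))
  comul_one : rTensor A comul (comul one)
    = mulT3 k A mul (comul one ⊗ₜ[k] one)
        ((TensorProduct.assoc k A A A).symm (one ⊗ₜ[k] comul one))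
  comul_one' : rTensor A comul (comul one)
    = mulT3 k A mul ((TensorProduct.assoc k A A A).symm (one ⊗ₜ[k] comul one))
        (comul one ⊗ₜ[k] one)

/-- The source counital map `ε_s(x) = 1₁ ε(x 1₂)`. -/
noncomputable def epsS (mul : A →ₗ[k] A →ₗ[k] A) (one : A)
    (comul : A →ₗ[k] A ⊗[k] A) (counit : A →ₗ[k] k) : A → A :=
  fun x => (TensorProduct.rid k A) (lTensor A (counit ∘ₗ mul x) (comul one))

/-- The target counital map `ε_t(x) = ε(1₁ x) 1₂`. -/
noncomputable def epsT (mul : A →ₗ[k] A →ₗ[k] A) (one : A)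
    (comul : A →ₗ[k] A ⊗[k] A) (counit : A →ₗ[k] k) : A → A :=
  fun x => (TensorProduct.lid k A) (rTensor A (counit ∘ₗ mul.flip x) (comul one))

/-- The weak Hopf algebra axioms: a weak bialgebra together with an antipode `S`
satisfying `S(h₁)h₂ = ε_s(h)`, `h₁S(h₂) = ε_t(h)` and `S(h₁)h₂S(h₃) = S(h)`. -/
structure IsWeakHopf (mul : A →ₗ[k] A →ₗ[k] A) (one : A)
    (comul : A →ₗ[k] A ⊗[k] A) (counit : A →ₗ[k] k) (S : A →ₗ[k] A) : Prop where
  toIsWeakBialgebra : IsWeakBialgebra k A mul one comul counit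
  antipode_s : ∀ h : A, TensorProduct.lift mul (rTensor A S (comul h))
    = epsS k A mul one comul counit h
  antipode_t : ∀ h : A, TensorProduct.lift mul (lTensor A S (comul h))
    = epsT k A mul one comul counit h
  antipode_mid : ∀ h : A, TensorProduct.lift mul (rTensor A (TensorProduct.lift mul)
      (TensorProduct.map (rTensor A S) S (rTensor A comul (comul h)))) = S h

/-- `(A, mul, one, comul, counit)` is a bialgebra: the counit is multiplicative and
`Δ(1) = 1 ⊗ 1`. -/
def IsBialgebra (mul : A →ₗ[k] A →ₗ[k] A) (one : A)
    (comul : A →ₗ[k] A ⊗[k] A) (counit : A →ₗ[k] k) : Prop :=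
  (∀ a b : A, counit (mul a b) = counit a * counit b) ∧ comul one = one ⊗ₜ[k] one

/-- `(A, mul, one, comul, counit, S)` is a Hopf algebra: a bialgebra whose antipode
satisfies `S(h₁)h₂ = ε(h)1 = h₁S(h₂)`. -/
def IsHopf (mul : A →ₗ[k] A →ₗ[k] A) (one : A)
    (comul : A →ₗ[k] A ⊗[k] A) (counit : A →ₗ[k] k) (S : A →ₗ[k] A) : Prop :=
  IsWeakBialgebra k A mul one comul counit ∧ IsBialgebra k A mul one comul counit ∧
  (∀ h : A, TensorProduct.lift mul (rTensor A S (comul h)) = counit h • one) ∧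
  (∀ h : A, TensorProduct.lift mul (lTensor A S (comul h)) = counit h • one)

section PathAlgebra

universe u
variable (V : Type u) [Quiver.{u + 1} V] [DecidableEq V]

/-- The set of paths of the quiver `V` (with arbitrary endpoints). -/
abbrev PathsOf := Σ a b : V, Quiver.Path a b

/-- The underlying vector space of the path algebra `kQ`. -/
abbrev PathAlg := PathsOf V →₀ k

variable {V} in
/-- Transport of a path along an equality of its source. -/
def castPath {a a' b : V} (h : a = a') (p : Quiver.Path a b) : Quiver.Path a' b := h ▸ p

variable {k V} in
/-- The product of two basis paths: their concatenation when composable, `0` otherwise. -/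
noncomputable def pathCompδ (p q : PathsOf V) : PathAlg k V :=
  if h : q.1 = p.2.1 then
    Finsupp.single ⟨p.1, q.2.1, p.2.2.comp (castPath h q.2.2)⟩ (1 : k)
  else 0

/-- The multiplication of the path algebra `kQ` (concatenation of composable paths). -/
noncomputable def pathMul : PathAlg k V →ₗ[k] PathAlg k V →ₗ[k] PathAlg k V :=
  Finsupp.lsum k fun p =>
    LinearMap.toSpanSingleton k (PathAlg k V →ₗ[k] PathAlg k V)
      (Finsupp.lsum k fun q => LinearMap.toSpanSingleton k (PathAlg k V) (pathCompδ p q))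

/-- The unit `Σᵢ eᵢ` of the path algebra (requires finitely many vertices). -/
noncomputable def pathOne [Fintype V] : PathAlg k V :=
  ∑ v : V, Finsupp.single ⟨v, v, Quiver.Path.nil⟩ (1 : k)

/-- The comultiplication `Δ(p) = p ⊗ p` on the path algebra. -/
noncomputable def pathComul : PathAlg k V →ₗ[k] PathAlg k V ⊗[k] PathAlg k V :=
  Finsupp.lsum k fun p =>
    LinearMap.toSpanSingleton k (PathAlg k V ⊗[k] PathAlg k V)
      (Finsupp.single p (1 : k) ⊗ₜ[k] Finsupp.single p (1 : k))

/-- The counit `ε(p) = 1` on the path algebra. -/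
noncomputable def pathCounit : PathAlg k V →ₗ[k] k :=
  Finsupp.lsum k fun _ => (LinearMap.id : k →ₗ[k] k)

end PathAlgebra
set_option linter.unusedSectionVars false
set_option maxHeartbeats 1000000
set_option synthInstance.maxHeartbeats 400000
section Lemmas
universe u
variable {k : Type*} [Field k] {V : Type u} [Quiver.{u + 1} V] [DecidableEq V]

@[simp] lemma castPath_rfl {a b : V} (p : Quiver.Path a b) : castPath rfl p = p := rfl

lemma mul_single (p q : PathsOf V) (c d : k) :
    pathMul k V (Finsupp.single p c) (Finsupp.single q d) = (c * d) • pathCompδ p q := by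
  simp [pathMul, smul_smul, mul_comm]

lemma comul_single (p : PathsOf V) (c : k) :
    pathComul k V (Finsupp.single p c)
      = c • (Finsupp.single p (1:k) ⊗ₜ[k] Finsupp.single p (1:k)) := by
  simp [pathComul]

lemma counit_single (p : PathsOf V) (c : k) : pathCounit k V (Finsupp.single p c) = c := by
  simp [pathCounit]

lemma mulT_tmul {A : Type*} [AddCommGroup A] [Module k A] (mul : A →ₗ[k] A →ₗ[k] A)
    (a b c d : A) : mulT k A mul (a ⊗ₜ[k] b) (c ⊗ₜ[k] d) = mul a c ⊗ₜ[k] mul b d := by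
  simp [mulT]

lemma mulT3_tmul {A : Type*} [AddCommGroup A] [Module k A] (mul : A →ₗ[k] A →ₗ[k] A)
    (x y : A ⊗[k] A) (a b : A) :
    mulT3 k A mul (x ⊗ₜ[k] a) (y ⊗ₜ[k] b) = mulT k A mul x y ⊗ₜ[k] mul a b := by
  simp [mulT3]

lemma counit2_tmul {A : Type*} [AddCommGroup A] [Module k A] (counit : A →ₗ[k] k) (a b : A) :
    counit2 k A counit (a ⊗ₜ[k] b) = counit a * counit b := by
  simp [counit2]

lemma mul_single_single {a b c : V} (p : Quiver.Path a b) (q : Quiver.Path b c) (x y : k) :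
    pathMul k V (Finsupp.single ⟨a, b, p⟩ x) (Finsupp.single ⟨b, c, q⟩ y)
      = Finsupp.single ⟨a, c, p.comp q⟩ (x * y) := by
  rw [mul_single]
  unfold pathCompδ
  rw [dif_pos rfl]
  simp [Finsupp.smul_single]

lemma mul_single_zero (p q : PathsOf V) (h : ¬ (q.1 = p.2.1)) (x y : k) :
    pathMul k V (Finsupp.single p x) (Finsupp.single q y) = 0 := by
  rw [mul_single]
  unfold pathCompδ
  rw [dif_neg h]
  simp

/-- trivial path basis element -/
noncomputable def Ev (v : V) : PathAlg k V := Finsupp.single ⟨v, v, Quiver.Path.nil⟩ (1 : k)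

lemma pathOne_eq [Fintype V] : pathOne k V = ∑ v : V, (Ev v : PathAlg k V) := rfl

lemma single_mul_one [Fintype V] (p : PathsOf V) (c : k) :
    pathMul k V (Finsupp.single p c) (pathOne k V) = Finsupp.single p c := by
  obtain ⟨a, b, pp⟩ := p
  rw [pathOne, map_sum]
  rw [Finset.sum_eq_single b]
  · simp [mul_single, Ev, pathCompδ]
  · intro v _ hv
    simp [mul_single, Ev, pathCompδ, hv]
  · simp

lemma one_mul_single [Fintype V] (p : PathsOf V) (c : k) :
    pathMul k V (pathOne k V) (Finsupp.single p c) = Finsupp.single p c := by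
  obtain ⟨a, b, pp⟩ := p
  rw [pathOne, map_sum, LinearMap.sum_apply]
  rw [Finset.sum_eq_single a]
  · simp [mul_single, pathCompδ]
  · intro v _ hv
    have h2 : ¬ (a = v) := fun h => hv h.symm
    simp [mul_single, pathCompδ, h2]
  · simp

lemma one_mul' [Fintype V] (x : PathAlg k V) : pathMul k V (pathOne k V) x = x := by
  induction x using Finsupp.induction_linear with
  | zero => simp
  | add f g hf hg => simp [map_add, hf, hg]
  | single p c => exact one_mul_single p c

lemma mul_one' [Fintype V] (x : PathAlg k V) : pathMul k V x (pathOne k V) = x := by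
  induction x using Finsupp.induction_linear with
  | zero => simp
  | add f g hf hg => simp [map_add, LinearMap.add_apply, hf, hg]
  | single p c => exact single_mul_one p c

lemma E_mul_E [Fintype V] (v w : V) :
    pathMul k V (Ev v) (Ev w) = if w = v then (Ev v : PathAlg k V) else 0 := by
  simp only [Ev, mul_single, one_mul, one_smul, pathCompδ]
  split_ifs with h
  · subst h; rfl
  · rfl

lemma comul_one_eq [Fintype V] :
    pathComul k V (pathOne k V)
      = ∑ v : V, (Ev v ⊗ₜ[k] Ev v : PathAlg k V ⊗[k] PathAlg k V) := by
  rw [pathOne, map_sum]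
  simp [pathComul, Ev]

lemma comul_Ev (v : V) : pathComul k V (Ev v) = (Ev v ⊗ₜ[k] Ev v) := by
  simp [Ev, comul_single]

lemma comul_compδ (p q : PathsOf V) :
    pathComul k V (pathCompδ p q) = pathCompδ p q ⊗ₜ[k] pathCompδ p q := by
  unfold pathCompδ
  split_ifs with h
  · simp [comul_single]
  · simp

lemma counit_compδ (p q : PathsOf V) :
    pathCounit k V (pathCompδ p q) = if q.1 = p.2.1 then (1 : k) else 0 := by
  unfold pathCompδ
  split_ifs with h
  · simp [counit_single]
  · simp

lemma mul_assoc' [Fintype V] (x y z : PathAlg k V) :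
    pathMul k V (pathMul k V x y) z = pathMul k V x (pathMul k V y z) := by
  induction x using Finsupp.induction_linear with
  | zero => simp
  | add f g hf hg => simp [map_add, LinearMap.add_apply, hf, hg]
  | single p cp =>
  induction y using Finsupp.induction_linear with
  | zero => simp
  | add f g hf hg => simp [map_add, LinearMap.add_apply, hf, hg]
  | single q cq =>
  induction z using Finsupp.induction_linear with
  | zero => simp
  | add f g hf hg => simp [map_add, hf, hg]
  | single r cr =>
  obtain ⟨a, b, p⟩ := p; obtain ⟨a', b', q⟩ := q; obtain ⟨a'', b'', r⟩ := r
  by_cases h1 : a' = b <;> by_cases h2 : a'' = b'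
  · subst h1; subst h2
    rw [mul_single_single, mul_single_single, mul_single_single, mul_single_single]
    simp [Quiver.Path.comp_assoc, mul_assoc]
  · subst h1
    rw [mul_single_single, mul_single_zero _ _ h2, mul_single_zero _ _ h2, map_zero]
  · subst h2
    rw [mul_single_zero _ _ h1, mul_single_single, mul_single_zero _ _ h1, map_zero,
      LinearMap.zero_apply]
  · rw [mul_single_zero _ _ h1, mul_single_zero _ _ h2, map_zero, map_zero,
      LinearMap.zero_apply]


lemma coassoc' (x : PathAlg k V) :
    rTensor _ (pathComul k V) (pathComul k V x)
      = (TensorProduct.assoc k _ _ _).symm (lTensor _ (pathComul k V) (pathComul k V x)) := by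
  induction x using Finsupp.induction_linear with
  | zero => simp only [map_zero, LinearEquiv.map_zero]
  | add f g hf hg => simp only [map_add, LinearEquiv.map_add, hf, hg]
  | single p c =>
    simp [comul_single, TensorProduct.smul_tmul', TensorProduct.smul_tmul,
      rTensor_tmul, lTensor_tmul, TensorProduct.assoc_symm_tmul]

lemma counit_left' (x : PathAlg k V) :
    (TensorProduct.lid k _) (rTensor _ (pathCounit k V) (pathComul k V x)) = x := by
  induction x using Finsupp.induction_linear with
  | zero => simp only [map_zero, LinearEquiv.map_zero]
  | add f g hf hg => simp only [map_add, LinearEquiv.map_add, hf, hg]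
  | single p c =>
    simp [comul_single, counit_single, TensorProduct.smul_tmul']

lemma counit_right' (x : PathAlg k V) :
    (TensorProduct.rid k _) (lTensor _ (pathCounit k V) (pathComul k V x)) = x := by
  induction x using Finsupp.induction_linear with
  | zero => simp only [map_zero, LinearEquiv.map_zero]
  | add f g hf hg => simp only [map_add, LinearEquiv.map_add, hf, hg]
  | single p c =>
    simp [comul_single, counit_single, TensorProduct.smul_tmul']

lemma comul_mul' (x y : PathAlg k V) :
    pathComul k V (pathMul k V x y)
      = mulT k _ (pathMul k V) (pathComul k V x) (pathComul k V y) := by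
  induction x using Finsupp.induction_linear with
  | zero => simp
  | add f g hf hg => simp [map_add, LinearMap.add_apply, hf, hg]
  | single p c =>
  induction y using Finsupp.induction_linear with
  | zero => simp
  | add f g hf hg => simp [map_add, hf, hg]
  | single q d =>
    rw [mul_single, map_smul, comul_compδ, comul_single, comul_single]
    simp only [map_smul, LinearMap.smul_apply]
    rw [mulT_tmul, mul_single]
    simp only [one_mul, one_smul, smul_smul]
    rw [mul_comm d c]


lemma counit_mul_mul (p q r : PathsOf V) (x y z : k) :
    pathCounit k V (pathMul k V (pathMul k V (Finsupp.single p x) (Finsupp.single q y))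
        (Finsupp.single r z))
      = x * y * z * (if q.1 = p.2.1 then 1 else 0) * (if r.1 = q.2.1 then 1 else 0) := by
  obtain ⟨a, b, p⟩ := p; obtain ⟨a', b', q⟩ := q; obtain ⟨a'', b'', r⟩ := r
  by_cases h1 : a' = b <;> by_cases h2 : a'' = b'
  · subst h1; subst h2
    rw [mul_single_single, mul_single_single, counit_single]
    simp
  · subst h1
    rw [mul_single_single, mul_single_zero _ _ h2, map_zero]
    simp [h2]
  · subst h2
    rw [mul_single_zero _ _ h1, map_zero, LinearMap.zero_apply, map_zero]
    simp [h1]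
  · rw [mul_single_zero _ _ h1, map_zero, LinearMap.zero_apply, map_zero]
    simp [h1]

lemma counit_weak_ax [Fintype V] (x y z : PathAlg k V) :
    pathCounit k V (pathMul k V (pathMul k V x y) z)
      = counit2 k _ (pathCounit k V)
          (mulT k _ (pathMul k V)
            (mulT k _ (pathMul k V) (x ⊗ₜ[k] pathOne k V) (pathComul k V y))
            (pathOne k V ⊗ₜ[k] z)) := by
  induction x using Finsupp.induction_linear with
  | zero => simp [TensorProduct.zero_tmul]
  | add f g hf hg => simp only [map_add, LinearMap.add_apply, TensorProduct.add_tmul, hf, hg]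
  | single p cp =>
  induction y using Finsupp.induction_linear with
  | zero => simp
  | add f g hf hg => simp only [map_add, LinearMap.add_apply, hf, hg]
  | single q cq =>
  induction z using Finsupp.induction_linear with
  | zero => simp [TensorProduct.tmul_zero]
  | add f g hf hg => simp only [map_add, LinearMap.add_apply, TensorProduct.tmul_add, hf, hg]
  | single r cr =>
    rw [counit_mul_mul, comul_single]
    simp only [map_smul, LinearMap.smul_apply, mulT_tmul]
    rw [one_mul', mul_single]
    simp only [map_smul, LinearMap.smul_apply]
    rw [mul_one', mul_single]
    simp only [TensorProduct.smul_tmul', TensorProduct.smul_tmul, map_smul, counit2_tmul,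
      counit_compδ, smul_eq_mul]
    ring


lemma counit_weak_ax' [Fintype V] (x y z : PathAlg k V) :
    pathCounit k V (pathMul k V (pathMul k V x y) z)
      = counit2 k _ (pathCounit k V)
          (mulT k _ (pathMul k V)
            (mulT k _ (pathMul k V) (pathOne k V ⊗ₜ[k] x) (pathComul k V y))
            (z ⊗ₜ[k] pathOne k V)) := by
  induction x using Finsupp.induction_linear with
  | zero => simp [TensorProduct.tmul_zero]
  | add f g hf hg => simp only [map_add, LinearMap.add_apply, TensorProduct.tmul_add, hf, hg]
  | single p cp =>
  induction y using Finsupp.induction_linear with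
  | zero => simp
  | add f g hf hg => simp only [map_add, LinearMap.add_apply, hf, hg]
  | single q cq =>
  induction z using Finsupp.induction_linear with
  | zero => simp [TensorProduct.zero_tmul]
  | add f g hf hg => simp only [map_add, LinearMap.add_apply, TensorProduct.add_tmul, hf, hg]
  | single r cr =>
    rw [counit_mul_mul, comul_single]
    simp only [map_smul, LinearMap.smul_apply, mulT_tmul]
    rw [one_mul', mul_single]
    simp only [map_smul, LinearMap.smul_apply, TensorProduct.smul_tmul', TensorProduct.smul_tmul]
    rw [mul_one', mul_single]
    simp only [TensorProduct.smul_tmul', TensorProduct.smul_tmul, map_smul, counit2_tmul,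
      counit_compδ, smul_eq_mul]
    ring

lemma comul_one_ax [Fintype V] :
    rTensor _ (pathComul k V) (pathComul k V (pathOne k V))
      = mulT3 k _ (pathMul k V) (pathComul k V (pathOne k V) ⊗ₜ[k] pathOne k V)
          ((TensorProduct.assoc k _ _ _).symm
            (pathOne k V ⊗ₜ[k] pathComul k V (pathOne k V))) := by
  rw [comul_one_eq, pathOne_eq]
  simp only [map_sum, rTensor_tmul, comul_Ev, TensorProduct.sum_tmul, TensorProduct.tmul_sum,
    LinearMap.sum_apply, TensorProduct.assoc_symm_tmul, mulT3_tmul, mulT_tmul, E_mul_E,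
    TensorProduct.ite_tmul, TensorProduct.tmul_ite]
  simp [Finset.sum_ite_eq, Finset.sum_ite_eq']

lemma comul_one_ax' [Fintype V] :
    rTensor _ (pathComul k V) (pathComul k V (pathOne k V))
      = mulT3 k _ (pathMul k V)
          ((TensorProduct.assoc k _ _ _).symm
            (pathOne k V ⊗ₜ[k] pathComul k V (pathOne k V)))
          (pathComul k V (pathOne k V) ⊗ₜ[k] pathOne k V) := by
  rw [comul_one_eq, pathOne_eq]
  simp only [map_sum, rTensor_tmul, comul_Ev, TensorProduct.sum_tmul, TensorProduct.tmul_sum,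
    LinearMap.sum_apply, TensorProduct.assoc_symm_tmul, mulT3_tmul, mulT_tmul, E_mul_E,
    TensorProduct.ite_tmul, TensorProduct.tmul_ite]
  simp [Finset.sum_ite_eq, Finset.sum_ite_eq']


lemma counit_mul_of_all_eq [Fintype V] (hV : ∀ a b : V, a = b) (x y : PathAlg k V) :
    pathCounit k V (pathMul k V x y) = pathCounit k V x * pathCounit k V y := by
  induction x using Finsupp.induction_linear with
  | zero => simp
  | add f g hf hg => simp only [map_add, LinearMap.add_apply, hf, hg]; ring
  | single p cp =>
  induction y using Finsupp.induction_linear with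
  | zero => simp
  | add f g hf hg => simp only [map_add, hf, hg]; ring
  | single q cq =>
    rw [mul_single, map_smul, counit_compδ, counit_single, counit_single,
      if_pos (hV _ _), smul_eq_mul, mul_one]

end Lemmas

/-- For a finite quiver `Q`, the path algebra `kQ`, equipped with
`Δ(p) = p ⊗ p` and `ε(p) = 1` for every path `p` (including the trivial paths), is a weak
bialgebra.  It is a bialgebra if and only if `Q` has exactly one vertex. -/
theorem path_algebra_weak_bialgebra (V : Type u) [Quiver.{u + 1} V] [Fintype V]
    [DecidableEq V] [Nonempty V] :
    IsWeakBialgebra k (PathAlg k V) (pathMul k V) (pathOne k V) (pathComul k V)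
      (pathCounit k V) ∧
    (IsBialgebra k (PathAlg k V) (pathMul k V) (pathOne k V) (pathComul k V)
      (pathCounit k V) ↔ ∀ a b : V, a = b) := by
  constructor
  · exact {
      mul_assoc := mul_assoc'
      one_mul := one_mul'
      mul_one := mul_one'
      coassoc := coassoc'
      counit_left := counit_left'
      counit_right := counit_right'
      comul_mul := comul_mul'
      counit_weak := counit_weak_ax
      counit_weak' := counit_weak_ax'
      comul_one := comul_one_ax
      comul_one' := comul_one_ax' }
  · constructor
    · rintro ⟨hcounit, -⟩ a b
      have h := hcounit (Ev a) (Ev b)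
      rw [E_mul_E] at h
      by_cases hab : b = a
      · exact hab.symm
      · rw [if_neg hab, map_zero] at h
        simp [Ev, counit_single] at h
    · intro hV
      constructor
      · exact counit_mul_of_all_eq hV
      · have : Subsingleton V := ⟨hV⟩
        have hu : Unique V := uniqueOfSubsingleton (Classical.arbitrary V)
        rw [comul_one_eq, pathOne_eq]
        rw [Fintype.sum_unique, Fintype.sum_unique]

end WeakBialgebraRaw
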